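/- Maximum principle for the forward Euler map of the one-dimensional elliptic scheme: let h > 0 and 0 < dt ≤ (h⁴/2)^{1/3}. Then for every u : ℝ → ℝ and every x ∈ ℝ, min( u(x−h), u(x), u(x+h) ) ≤ u(x) + dt·F^{1D,e}[u](x) ≤ max( u(x−h), u(x), u(x+h) ). -/

import Mathlib

/-- The real cube root: `cbrt r = sgn(r) · |r|^{1/3}`. -/
noncomputable def cbrt (r : ℝ) : ℝ := Real.sign r * |r| ^ ((1 : ℝ) / 3)

/-- `A(p,q) = cbrt(p² q)`. -/
noncomputable def Afun (p q : ℝ) : ℝ := cbrt (p ^ 2 * q)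

/-- `A⁺(p,q) = A(p⁺, q⁺)`. -/
noncomputable def Aplus (p q : ℝ) : ℝ := Afun (max p 0) (max q 0)

/-- `A⁻(p,q) = A(p⁻, q⁻)`. -/
noncomputable def Aminus (p q : ℝ) : ℝ := Afun (min p 0) (min q 0)

/-- Backward difference `D⁻u(x) = (u(x) − u(x−h))/h`. -/
noncomputable def Dminus (h : ℝ) (u : ℝ → ℝ) (x : ℝ) : ℝ := (u x - u (x - h)) / h

/-- Forward difference `D⁺u(x) = (u(x+h) − u(x))/h`. -/
noncomputable def Dplus (h : ℝ) (u : ℝ → ℝ) (x : ℝ) : ℝ := (u (x + h) - u x) / h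

/-- Centered second difference `u_{xx}^h(x) = (u(x+h) − 2u(x) + u(x−h))/h²`. -/
noncomputable def uxxh (h : ℝ) (u : ℝ → ℝ) (x : ℝ) : ℝ :=
  (u (x + h) - 2 * u x + u (x - h)) / h ^ 2

/-- `|u_x^h|⁺(x) = max(−D⁺u(x), D⁻u(x), 0)`. -/
noncomputable def absUxP (h : ℝ) (u : ℝ → ℝ) (x : ℝ) : ℝ :=
  max (-Dplus h u x) (max (Dminus h u x) 0)

/-- `|u_x^h|⁻(x) = −min(−D⁺u(x), D⁻u(x), 0)`. -/
noncomputable def absUxM (h : ℝ) (u : ℝ → ℝ) (x : ℝ) : ℝ :=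
  -min (-Dplus h u x) (min (Dminus h u x) 0)

/-- The elliptic scheme
`F^{1D,e}[u](x) = −[A⁺(|u_x^h|⁺, −u_{xx}^h) + A⁻(−|u_x^h|⁻, −u_{xx}^h)]`. -/
noncomputable def F1De (h : ℝ) (u : ℝ → ℝ) (x : ℝ) : ℝ :=
  -(Aplus (absUxP h u x) (-uxxh h u x) + Aminus (-absUxM h u x) (-uxxh h u x))

lemma cbrt_zero' : cbrt 0 = 0 := by simp [cbrt]

lemma cbrt_of_nonneg' {r : ℝ} (hr : 0 ≤ r) : cbrt r = r ^ ((1 : ℝ) / 3) := by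
  rcases hr.eq_or_lt with h | h
  · rw [← h, cbrt, Real.sign_zero, zero_mul,
      Real.zero_rpow (by norm_num : (1:ℝ)/3 ≠ 0)]
  · rw [cbrt, Real.sign_of_pos h, abs_of_pos h, one_mul]

lemma cbrt_of_nonpos' {r : ℝ} (hr : r ≤ 0) : cbrt r = -((-r) ^ ((1 : ℝ) / 3)) := by
  rcases hr.eq_or_lt with h | h
  · rw [h, cbrt, Real.sign_zero, zero_mul, neg_zero,
      Real.zero_rpow (by norm_num : (1:ℝ)/3 ≠ 0), neg_zero]
  · rw [cbrt, Real.sign_of_neg h, abs_of_neg h, neg_one_mul]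

lemma key_bound (h dt p q : ℝ) (hh : 0 < h) (hdt : 0 ≤ dt)
    (hdt2 : dt ≤ (h ^ 4 / 2) ^ ((1 : ℝ) / 3)) (hp : 0 ≤ p) (hq : 0 ≤ q)
    (hpq : q ≤ 2 * p / h) : dt * (p ^ 2 * q) ^ ((1 : ℝ) / 3) ≤ h * p := by
  have h1 : p ^ 2 * q ≤ 2 / h * p ^ 3 := by
    have := mul_le_mul_of_nonneg_left hpq (sq_nonneg p)
    calc p ^ 2 * q ≤ p ^ 2 * (2 * p / h) := this
      _ = 2 / h * p ^ 3 := by field_simp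
  have h2 : (p ^ 2 * q) ^ ((1:ℝ)/3) ≤ (2 / h * p ^ 3) ^ ((1:ℝ)/3) :=
    Real.rpow_le_rpow (by positivity) h1 (by norm_num)
  have h3 : (2 / h * p ^ 3) ^ ((1:ℝ)/3) = (2 / h) ^ ((1:ℝ)/3) * p := by
    rw [Real.mul_rpow (by positivity) (by positivity)]
    congr 1
    rw [← Real.rpow_natCast p 3, ← Real.rpow_mul hp]
    norm_num
  calc dt * (p ^ 2 * q) ^ ((1:ℝ)/3)
      ≤ (h ^ 4 / 2) ^ ((1:ℝ)/3) * ((2 / h) ^ ((1:ℝ)/3) * p) := by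
        apply mul_le_mul hdt2 (h2.trans h3.le) (by positivity) (by positivity)
    _ = ((h ^ 4 / 2) * (2 / h)) ^ ((1:ℝ)/3) * p := by
        rw [← mul_assoc, ← Real.mul_rpow (by positivity) (by positivity)]
    _ = h * p := by
        have he : (h ^ 4 / 2) * (2 / h) = h ^ 3 := by field_simp
        rw [he, ← Real.rpow_natCast h 3, ← Real.rpow_mul hh.le]
        norm_num

/-- Maximum principle for the forward Euler map of the one-dimensional elliptic scheme:
for `0 < dt ≤ (h⁴/2)^{1/3}`,
`min(u(x−h), u(x), u(x+h)) ≤ u(x) + dt F^{1D,e}[u](x) ≤ max(u(x−h), u(x), u(x+h))`. -/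
theorem forward_euler_maximum_principle (h dt : ℝ) (hh : 0 < h) (hdt : 0 < dt)
    (hdt2 : dt ≤ (h ^ 4 / 2) ^ ((1 : ℝ) / 3)) :
    ∀ (u : ℝ → ℝ) (x : ℝ),
      min (u (x - h)) (min (u x) (u (x + h))) ≤ u x + dt * F1De h u x ∧
      u x + dt * F1De h u x ≤ max (u (x - h)) (max (u x) (u (x + h))) := by
  intro u x
  set A := u (x - h) with hA
  set B := u x with hB
  set C := u (x + h) with hC
  set P := absUxP h u x with hPdef
  set M := absUxM h u x with hMdef
  set Q := -uxxh h u x with hQdef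
  have hPge : 0 ≤ P := le_trans (le_max_right _ _) (le_max_right _ _)
  have hMge : 0 ≤ M := by
    rw [hMdef, absUxM]
    simp only [neg_nonneg]
    exact le_trans (min_le_right _ _) (min_le_right _ _)
  have hhP : h * P = max (B - C) (max (B - A) 0) := by
    rw [hPdef, absUxP, Dplus, Dminus]
    rw [mul_max_of_nonneg _ _ hh.le, mul_max_of_nonneg _ _ hh.le]
    rw [mul_zero]
    congr 2
    · field_simp; rw [hB, hC]; ring
    · field_simp; rw [hB, hA]
  have hhM : h * M = max (C - B) (max (A - B) 0) := by
    rw [hMdef, absUxM, Dplus, Dminus]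
    rw [← max_neg_neg, ← max_neg_neg, neg_neg, neg_zero]
    rw [mul_max_of_nonneg _ _ hh.le, mul_max_of_nonneg _ _ hh.le, mul_zero]
    congr 2
    · field_simp; rw [hC, hB]
    · rw [mul_neg]; field_simp; rw [hA, hB]; ring
  have hQval : Q = (2 * B - A - C) / h ^ 2 := by
    rw [hQdef, uxxh]
    show -((C - 2 * B + A) / h ^ 2) = _
    ring
  have hBA : B - A ≤ h * P := by rw [hhP]; exact le_trans (le_max_left _ _) (le_max_right _ _)
  have hBC : B - C ≤ h * P := by rw [hhP]; exact le_max_left _ _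
  have hAB : A - B ≤ h * M := by rw [hhM]; exact le_trans (le_max_left _ _) (le_max_right _ _)
  have hCB : C - B ≤ h * M := by rw [hhM]; exact le_max_left _ _
  have hminP : min A (min B C) + max (B - C) (max (B - A) 0) ≤ B := by
    rcases max_choice (B - C) (max (B - A) 0) with he | he <;> rw [he]
    · linarith [le_trans (min_le_right A (min B C)) (min_le_right B C)]
    · rcases max_choice (B - A) 0 with he2 | he2 <;> rw [he2]
      · linarith [min_le_left A (min B C)]
      · linarith [le_trans (min_le_right A (min B C)) (min_le_left B C)]
  have hmaxM : B + max (C - B) (max (A - B) 0) ≤ max A (max B C) := by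
    rcases max_choice (C - B) (max (A - B) 0) with he | he <;> rw [he]
    · linarith [le_trans (le_max_right B C) (le_max_right A (max B C))]
    · rcases max_choice (A - B) 0 with he2 | he2 <;> rw [he2]
      · linarith [le_max_left A (max B C)]
      · linarith [le_trans (le_max_left B C) (le_max_right A (max B C))]
  rcases le_total 0 Q with hQ0 | hQ0
  · -- Q ≥ 0 : F = -(P²Q)^{1/3} ≤ 0
    have hF : F1De h u x = -((P ^ 2 * Q) ^ ((1:ℝ)/3)) := by
      rw [F1De, ← hPdef, ← hMdef, ← hQdef]
      have h1 : Aplus P Q = (P ^ 2 * Q) ^ ((1:ℝ)/3) := by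
        rw [Aplus, max_eq_left hPge, max_eq_left hQ0, Afun,
          cbrt_of_nonneg' (by positivity)]
      have h2 : Aminus (-M) Q = 0 := by
        rw [Aminus, min_eq_right hQ0, Afun, mul_zero, cbrt_zero']
      rw [h1, h2, add_zero]
    have hQle : Q ≤ 2 * P / h := by
      rw [hQval, div_le_div_iff₀ (by positivity) hh]
      nlinarith
    have hkey := key_bound h dt P Q hh hdt.le hdt2 hPge hQ0 hQle
    have hFnn : 0 ≤ (P ^ 2 * Q) ^ ((1:ℝ)/3) := by positivity
    constructor
    · rw [hF]
      have : min A (min B C) + dt * (P ^ 2 * Q) ^ ((1:ℝ)/3) ≤ B := by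
        calc min A (min B C) + dt * (P ^ 2 * Q) ^ ((1:ℝ)/3)
            ≤ min A (min B C) + h * P := by linarith
          _ ≤ B := by linarith [hminP]
      linarith
    · rw [hF]
      have hBm : B ≤ max A (max B C) := le_trans (le_max_left B C) (le_max_right A _)
      linarith [mul_nonneg hdt.le hFnn]
  · -- Q ≤ 0 : F = (M²(-Q))^{1/3} ≥ 0
    have hF : F1De h u x = (M ^ 2 * (-Q)) ^ ((1:ℝ)/3) := by
      rw [F1De, ← hPdef, ← hMdef, ← hQdef]
      have h1 : Aplus P Q = 0 := by
        rw [Aplus, max_eq_right hQ0, Afun, mul_zero, cbrt_zero']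
      have h2 : Aminus (-M) Q = -((M ^ 2 * (-Q)) ^ ((1:ℝ)/3)) := by
        rw [Aminus, min_eq_left (neg_nonpos.mpr hMge), min_eq_left hQ0, Afun,
          neg_sq]
        rw [cbrt_of_nonpos' (by nlinarith [sq_nonneg M])]
        congr 1
        ring_nf
      rw [h1, h2, zero_add, neg_neg]
    have hQle : -Q ≤ 2 * M / h := by
      rw [hQval, ← neg_div, div_le_div_iff₀ (by positivity) hh]
      nlinarith
    have hkey := key_bound h dt M (-Q) hh hdt.le hdt2 hMge (by linarith) hQle
    have hFnn : 0 ≤ (M ^ 2 * (-Q)) ^ ((1:ℝ)/3) :=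
      Real.rpow_nonneg (mul_nonneg (by positivity) (neg_nonneg.mpr hQ0)) _
    constructor
    · rw [hF]
      have hmB : min A (min B C) ≤ B := le_trans (min_le_right _ _) (min_le_left _ _)
      linarith [mul_nonneg hdt.le hFnn]
    · rw [hF]
      calc B + dt * (M ^ 2 * (-Q)) ^ ((1:ℝ)/3)
          ≤ B + h * M := by linarith
        _ ≤ max A (max B C) := by linarith [hmaxM]
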